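/- arXiv:2304.09312 — 2 statements merged into one kernel-verified Lean document; each statement's English description precedes it below -/
import Mathlib

section
/- Let F be the free group on two generators b and λ, and let p > 1, r ≠ 0 be integers with gcd(p, r) = 1. Suppose v = λ^{p x₁}(b λ^r)^{y₁} λ^{p x₂}(b λ^r)^{y₂} ⋯ λ^{p x_l}(b λ^r)^{y_l}, where all x_i are nonzero integers of the same sign and all y_i are nonnegative integers, and suppose u = λ^{p n₁} b^{m₁} λ^{p n₂} b^{m₂} ⋯ λ^{p n_k} b^{m_k}, where all n_i are nonzero integers of the same sign and all m_i are nonzero integers of the same sign. If u is conjugate to v in F, then y_j = 0 for every j, and hence v = λ^{p(x₁ + ⋯ + x_l)} is a p-th power in F. -/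
open FreeGroup

private lemma prod_map_pow' {α G : Type*} [Group G] (c : G) (f : α → ℕ) :
    ∀ L : List α, (L.map fun i => c ^ f i).prod = c ^ (L.map f).sum := by
  intro L
  induction L with
  | nil => simp
  | cons a t ih => simp [ih, pow_add]

private lemma prod_map_zpow' {α G : Type*} [Group G] (c : G) (f : α → ℤ) :
    ∀ L : List α, (L.map fun i => c ^ f i).prod = c ^ (L.map f).sum := by
  intro L
  induction L with
  | nil => simp
  | cons a t ih => simp [ih, zpow_add]

private lemma fixed_zpow' {X : Type*} (σ : Equiv.Perm X) (x : X) (h : σ x = x) :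
    ∀ t : ℤ, (σ ^ t) x = x := by
  have hn : ∀ j : ℕ, (σ ^ j) x = x := by
    intro j
    induction j with
    | zero => simp
    | succ j ih => rw [pow_succ, Equiv.Perm.mul_apply, h, ih]
  intro t
  cases t with
  | ofNat j => simpa using hn j
  | negSucc j =>
      rw [zpow_negSucc]
      have h2 := hn (j + 1)
      calc (σ ^ (j+1))⁻¹ x = (σ ^ (j+1))⁻¹ ((σ ^ (j+1)) x) := by rw [h2]
        _ = x := Equiv.symm_apply_apply _ x

/-- in the free group on `b = of 0`, `λ = of 1`, with `p > 1`, `r ≠ 0`,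
`gcd (p, r) = 1`, if the word
`v = λ^{p x₁} (b λ^r)^{y₁} ⋯ λ^{p x_l} (b λ^r)^{y_l}` (all `xᵢ` nonzero of the same
sign, all `yᵢ ∈ ℕ`) is conjugate to
`u = λ^{p n₁} b^{m₁} ⋯ λ^{p n_k} b^{m_k}` (all `nᵢ` nonzero of the same sign, all
`mᵢ` nonzero of the same sign), then every `y_j = 0` and
`v = λ^{p (x₁ + ⋯ + x_l)}` is a `p`-th power. -/
theorem conj_forces_power (p r : ℤ) (hp : 1 < p) (hr : r ≠ 0) (hcop : Int.gcd p r = 1)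
    (l k : ℕ) (x : Fin l → ℤ) (y : Fin l → ℕ) (n : Fin k → ℤ) (m : Fin k → ℤ)
    (hx : ∀ i j, 0 < x i * x j) (hn : ∀ i j, 0 < n i * n j) (hm : ∀ i j, 0 < m i * m j)
    (b lam : FreeGroup (Fin 2)) (hb : b = FreeGroup.of 0) (hlam : lam = FreeGroup.of 1)
    (v u : FreeGroup (Fin 2))
    (hv : v = ((List.finRange l).map (fun i => lam ^ (p * x i) * (b * lam ^ r) ^ (y i))).prod)
    (hu : u = ((List.finRange k).map (fun i => lam ^ (p * n i) * b ^ (m i))).prod)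
    (hconj : IsConj u v) :
    (∀ j, y j = 0) ∧ v = lam ^ (p * (∑ i, x i)) := by
  -- setup
  have hp0 : (0 : ℤ) < p := by linarith
  set P : ℕ := p.toNat with hPdef
  have hP2 : 1 < P := by omega
  haveI : NeZero P := ⟨by omega⟩
  haveI : Fact (1 < P) := ⟨hP2⟩
  have hpP : (P : ℤ) = p := Int.toNat_of_nonneg (le_of_lt hp0)
  -- the permutations
  set A : Equiv.Perm (ZMod P × ℤ) :=
    Equiv.prodCongr (Equiv.addRight (1 : ZMod P)) (Equiv.refl ℤ) with hAdef
  set B : Equiv.Perm (ZMod P × ℤ) :=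
    Equiv.prodShear (Equiv.refl (ZMod P))
      (fun c => Equiv.addRight (if c = 0 then (1 : ℤ) else 0)) with hBdef
  have hA1 : ∀ c z, A (c, z) = (c + 1, z) := fun c z => rfl
  have hB1 : ∀ c z, B (c, z) = (c, z + if c = 0 then 1 else 0) := fun c z => rfl
  have hApow : ∀ (j : ℕ) (c : ZMod P) (z : ℤ), (A ^ j) (c, z) = (c + j, z) := by
    intro j
    induction j with
    | zero => intro c z; simp
    | succ j ih =>
        intro c z
        rw [pow_succ', Equiv.Perm.mul_apply, hA1, ih]
        push_cast
        ring_nf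
  have hAinv : ∀ (c : ZMod P) (z : ℤ), A⁻¹ (c, z) = (c - 1, z) := by
    intro c z
    have h : A⁻¹ (A (c - 1, z)) = (c - 1, z) := Equiv.symm_apply_apply A (c - 1, z)
    rw [hA1] at h
    simpa using h
  have hAz : ∀ (t : ℤ) (c : ZMod P) (z : ℤ), (A ^ t) (c, z) = (c + (t : ZMod P), z) := by
    intro t
    induction t using Int.induction_on with
    | zero => intro c z; simp
    | succ j ih =>
        intro c z
        rw [zpow_add_one, Equiv.Perm.mul_apply, hA1, ih]
        push_cast
        ring_nf
    | pred j ih =>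
        intro c z
        rw [zpow_sub_one, Equiv.Perm.mul_apply, hAinv, ih]
        push_cast
        ring_nf
  have hAP : A ^ (P : ℤ) = 1 := by
    rw [zpow_natCast]
    apply Equiv.ext
    rintro ⟨c, z⟩
    rw [hApow]
    simp
  have hAp1 : ∀ t : ℤ, A ^ (p * t) = 1 := by
    intro t
    rw [← hpP, zpow_mul, hAP, one_zpow]
  -- the homomorphism
  set φ : FreeGroup (Fin 2) →* Equiv.Perm (ZMod P × ℤ) :=
    FreeGroup.lift (fun i : Fin 2 => if i = 0 then B else A) with hφdef
  have hφb : φ b = B := by rw [hb, hφdef, FreeGroup.lift_apply_of]; simp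
  have hφlam : φ lam = A := by
    rw [hlam, hφdef, FreeGroup.lift_apply_of]
    norm_num
  -- image of u
  have hφu : φ u = B ^ ((List.finRange k).map m).sum := by
    rw [hu, map_list_prod, List.map_map]
    have h1 : (φ ∘ fun i => lam ^ (p * n i) * b ^ (m i)) = fun i => B ^ (m i) := by
      funext i
      simp only [Function.comp_apply, _root_.map_mul, map_zpow, hφlam, hφb, hAp1, one_mul]
    rw [h1, prod_map_zpow']
  -- u's image has a fixed point
  have hone : (1 : ZMod P) ≠ 0 := one_ne_zero
  have hBfix : B ((1 : ZMod P), (0 : ℤ)) = ((1 : ZMod P), (0 : ℤ)) := by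
    rw [hB1, if_neg hone]
    norm_num
  have hufix : φ u ((1 : ZMod P), (0 : ℤ)) = ((1 : ZMod P), (0 : ℤ)) := by
    rw [hφu]; exact fixed_zpow' B _ hBfix _
  -- image of v
  set ρ : ZMod P := ((r : ℤ) : ZMod P) with hρdef
  set C : Equiv.Perm (ZMod P × ℤ) := B * A ^ (r : ℤ) with hCdef
  have hC1 : ∀ (c : ZMod P) (z : ℤ),
      C (c, z) = (c + ρ, z + if c + ρ = 0 then 1 else 0) := by
    intro c z
    rw [hCdef, Equiv.Perm.mul_apply, hAz, hB1]
  set Y : ℕ := ((List.finRange l).map y).sum with hYdef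
  have hφv : φ v = C ^ Y := by
    rw [hv, map_list_prod, List.map_map]
    have h1 : (φ ∘ fun i => lam ^ (p * x i) * (b * lam ^ r) ^ (y i)) =
        fun i => C ^ (y i) := by
      funext i
      simp only [Function.comp_apply, _root_.map_mul, map_zpow, _root_.map_pow, hφlam, hφb,
        hAp1, one_mul, hCdef]
    rw [h1, prod_map_pow']
  -- count function
  set S : ZMod P → ℕ → ℤ := fun c Y =>
    ∑ j ∈ Finset.range Y, (if c + ((j : ZMod P) + 1) * ρ = 0 then (1 : ℤ) else 0) with hSdef
  have hCpow : ∀ (Yn : ℕ) (c : ZMod P) (z : ℤ),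
      (C ^ Yn) (c, z) = (c + (Yn : ZMod P) * ρ, z + S c Yn) := by
    intro Yn
    induction Yn with
    | zero => intro c z; simp [hSdef]
    | succ Yn ih =>
        intro c z
        rw [pow_succ', Equiv.Perm.mul_apply, ih, hC1]
        have hS : S c (Yn + 1) = S c Yn + (if c + ((Yn : ZMod P) + 1) * ρ = 0 then (1:ℤ) else 0) := by
          rw [hSdef]
          exact Finset.sum_range_succ _ _
        rw [hS]
        have hcond : c + (Yn : ZMod P) * ρ + ρ = c + ((Yn : ZMod P) + 1) * ρ := by ring
        rw [hcond]
        simp only [Prod.mk.injEq]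
        refine ⟨by push_cast; ring, by ring⟩
  -- rho is a unit
  have hpzero : ((p : ℤ) : ZMod P) = 0 := by
    rw [← hpP]
    push_cast
    exact ZMod.natCast_self P
  have hco : IsCoprime p r := Int.isCoprime_iff_gcd_eq_one.mpr hcop
  obtain ⟨a, b', hab⟩ := hco
  have hcast : (b' : ZMod P) * ρ = 1 := by
    have h1 : ((a * p + b' * r : ℤ) : ZMod P) = 1 := by rw [hab]; norm_num
    push_cast at h1
    rw [hpzero] at h1
    simpa [hρdef] using h1
  have hρu : IsUnit ρ := IsUnit.of_mul_eq_one (b' : ZMod P) (by rw [mul_comm]; exact hcast)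
  obtain ⟨w, hw⟩ := hρu
  -- conjugacy transfers the fixed point
  obtain ⟨g, hg⟩ := isConj_iff.mp hconj
  have hgu : g * u = v * g := by rw [← hg]; group
  set x0 : ZMod P × ℤ := ((1 : ZMod P), (0 : ℤ)) with hx0def
  have hvfix : φ v (φ g x0) = φ g x0 := by
    have h1 := congrArg (fun w => φ w x0) hgu
    simp only [_root_.map_mul, Equiv.Perm.mul_apply, hufix] at h1
    exact h1.symm
  set c : ZMod P := (φ g x0).1 with hcdef
  set z : ℤ := (φ g x0).2 with hzdef
  have hq : φ g x0 = (c, z) := rfl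
  rw [hφv, hq, hCpow] at hvfix
  have h1 : c + (Y : ZMod P) * ρ = c := congrArg Prod.fst hvfix
  have h2 : z + S c Y = z := congrArg Prod.snd hvfix
  have hY0 : Y = 0 := by
    by_contra hY
    have hYpos : 0 < Y := Nat.pos_of_ne_zero hY
    have hYρ : (Y : ZMod P) * ρ = 0 := by
      have := h1
      rwa [add_eq_left] at this
    have hYzero : (Y : ZMod P) = 0 := by
      have h3 : (Y : ZMod P) = (Y : ZMod P) * ρ * ↑w⁻¹ := by
        rw [mul_assoc, ← hw, Units.mul_inv, mul_one]
      rw [hYρ, zero_mul] at h3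
      exact h3
    have hPY : P ∣ Y := (ZMod.natCast_eq_zero_iff Y P).mp hYzero
    have hPle : P ≤ Y := Nat.le_of_dvd hYpos hPY
    set d : ZMod P := -c * ↑w⁻¹ - 1 with hddef
    have hdval : ((d.val : ℕ) : ZMod P) = d := ZMod.natCast_zmod_val d
    have hcond : c + ((d.val : ZMod P) + 1) * ρ = 0 := by
      rw [hdval, hddef, ← hw]
      have h4 : (-c * ↑w⁻¹ - 1 + 1) = -c * ↑w⁻¹ := by ring
      rw [h4]
      calc c + -c * ↑w⁻¹ * ↑w = c + -c * (↑w⁻¹ * ↑w) := by ring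
        _ = 0 := by rw [Units.inv_mul]; ring
    have hjlt : d.val < Y := lt_of_lt_of_le (ZMod.val_lt d) hPle
    have hge1 : (1 : ℤ) ≤ S c Y := by
      have hnn : ∀ j ∈ Finset.range Y,
          (0 : ℤ) ≤ if c + ((j : ZMod P) + 1) * ρ = 0 then (1 : ℤ) else 0 := by
        intro j _
        split <;> norm_num
      have h5 := Finset.single_le_sum hnn (Finset.mem_range.mpr hjlt)
      rw [if_pos hcond] at h5
      exact h5
    have hSz : S c Y = 0 := by
      have := h2
      rwa [add_eq_left] at this
    linarith
  have hsum0 : ((List.finRange l).map y).sum = 0 := hYdef.symm.trans hY0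
  have hy : ∀ j, y j = 0 := by
    intro j
    have hmem : y j ∈ (List.finRange l).map y :=
      List.mem_map.mpr ⟨j, List.mem_finRange j, rfl⟩
    exact List.sum_eq_zero_iff.mp hsum0 _ hmem
  refine ⟨hy, ?_⟩
  have hv' : v = ((List.finRange l).map (fun i => lam ^ (p * x i))).prod := by
    rw [hv]
    congr 1
    exact List.map_congr_left fun i _ => by rw [hy i, pow_zero, mul_one]
  rw [hv', prod_map_zpow']
  congr 1
  rw [Finset.mul_sum, Fin.sum_univ_def]
end

section
/- Let F be the free group on {b, λ}, p > 1 and r nonzero integers with gcd(p, r) = 1. Consider a cyclically reduced word v = λ^{p x₁}(b λ^r)^{y₁} ⋯ λ^{p x_l}(b λ^r)^{y_l} with all x_i nonzero of the same sign and all y_i positive. If some y_j ≥ 2, then v cannot be conjugate in F to any word of the form λ^{p n₁} b^{m₁} ⋯ λ^{p n_k} b^{m_k} with all n_i nonzero and all m_i nonzero. -/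
open Matrix Polynomial Complex

noncomputable section NoConjAux

/-- Sequence of traces of powers of a matrix with trace 3 and determinant 1. -/
def bseq : ℕ → ℝ
  | 0 => 2
  | 1 => 3
  | (n+2) => 3 * bseq (n+1) - bseq n

lemma bseq_ge : ∀ nn : ℕ, ((nn : ℝ) + 2 ≤ bseq nn) ∧ bseq nn + 1 ≤ bseq (nn+1) := by
  intro nn
  induction nn with
  | zero => constructor <;> norm_num [bseq]
  | succ k ih =>
    have e : bseq (k+2) = 3 * bseq (k+1) - bseq k := by simp [bseq]
    constructor
    · push_cast; linarith [ih.1, ih.2]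
    · rw [e]; push_cast at ih ⊢; linarith [ih.1, ih.2]

lemma list_prod_pow {G : Type*} [Monoid G] (g : G) {α : Type*} (L : List α) (f : α → ℕ) :
    (L.map fun i => g ^ f i).prod = g ^ (L.map f).sum := by
  induction L with
  | nil => simp
  | cons a t ih => simp [pow_add, ih]

lemma list_prod_zpow {G : Type*} [Group G] (g : G) {α : Type*} (L : List α) (f : α → ℤ) :
    (L.map fun i => g ^ f i).prod = g ^ (L.map f).sum := by
  induction L with
  | nil => simp
  | cons a t ih => simp [ih]; rw [_root_.zpow_add]

lemma list_prod_ofAdd {α : Type*} (L : List α) (f : α → ℤ) :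
    (L.map fun i => Multiplicative.ofAdd (f i)).prod
      = Multiplicative.ofAdd ((L.map f).sum) := by
  induction L with
  | nil => simp
  | cons a t ih => simp [ih]

lemma list_sum_split {α : Type*} (L : List α) (f g : α → ℤ) :
    (L.map fun i => f i + g i).sum = (L.map f).sum + (L.map g).sum := by
  induction L with
  | nil => simp
  | cons a t ih => simp [ih]; ring

lemma list_sum_cast {α : Type*} (L : List α) (f : α → ℕ) :
    ((L.map fun i => ((f i : ℤ))).sum) = ((L.map f).sum : ℤ) := by
  induction L with
  | nil => simp
  | cons a t ih => simp [ih]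

lemma ofAdd_one_zpow (z : ℤ) :
    (Multiplicative.ofAdd (1:ℤ)) ^ z = Multiplicative.ofAdd z := by
  rw [← ofAdd_zsmul]; simp

lemma ofAdd_one_pow (nn : ℕ) :
    (Multiplicative.ofAdd (1:ℤ)) ^ nn = Multiplicative.ofAdd (nn:ℤ) := by
  rw [← ofAdd_nsmul]; simp

/-- diagonal matrix `diag(u, 1)` -/
def Dm (u : ℂ) : Matrix (Fin 2) (Fin 2) ℂ := !![u, 0; 0, 1]

lemma Dm_mul (u v : ℂ) : Dm u * Dm v = Dm (u * v) := by
  simp [Dm, Matrix.mul_fin_two]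

/-- embedding of `ℂˣ` as diagonal matrices -/
def Du : ℂˣ →* (Matrix (Fin 2) (Fin 2) ℂ)ˣ where
  toFun u := ⟨Dm u, Dm ((u⁻¹ : ℂˣ) : ℂ),
    by rw [Dm_mul]; simp [Dm, Matrix.one_fin_two],
    by rw [Dm_mul]; simp [Dm, Matrix.one_fin_two]⟩
  map_one' := Units.ext (by simp [Dm, Matrix.one_fin_two])
  map_mul' u v := Units.ext (by simp [Dm_mul])

lemma Du_val (u : ℂˣ) :
    ((Du u : (Matrix (Fin 2) (Fin 2) ℂ)ˣ) : Matrix (Fin 2) (Fin 2) ℂ) = Dm u := rfl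

lemma cayley_S (ω a : ℂ) :
    !![a, 1; a*(1+ω⁻¹-a) - ω⁻¹, 1+ω⁻¹-a] * !![a, 1; a*(1+ω⁻¹-a) - ω⁻¹, 1+ω⁻¹-a]
      = (1 + ω⁻¹) • !![a, 1; a*(1+ω⁻¹-a) - ω⁻¹, 1+ω⁻¹-a] - ω⁻¹ • 1 := by
  ext i j; fin_cases i <;> fin_cases j <;>
    simp [Matrix.mul_apply, Fin.sum_univ_two, Matrix.one_apply] <;> ring

lemma cayley_N (ω a u : ℂ) (hw : ω * u = 1) (htr : a*ω + (1 + u - a) = 3) :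
    !![a*ω, 1; (a*(1+u-a)-u)*ω, 1+u-a] * !![a*ω, 1; (a*(1+u-a)-u)*ω, 1+u-a]
      = (3:ℂ) • !![a*ω, 1; (a*(1+u-a)-u)*ω, 1+u-a] - 1 := by
  ext i j; fin_cases i <;> fin_cases j <;>
    simp [Matrix.mul_apply, Fin.sum_univ_two, Matrix.one_apply]
  · linear_combination (a*ω) * htr - hw
  · linear_combination htr
  · linear_combination ((a*(1+u-a)-u)*ω) * htr
  · linear_combination (1+u-a) * htr - hw

set_option maxHeartbeats 1000000 in
/-- Core construction: a unit `S` of order dividing `p` such that no positive power of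
`S * diag(ω, 1)` is trivial. -/
lemma core (p : ℕ) (ω : ℂ) (hω0 : ω ≠ 0) (hω1 : ω ≠ 1) (hωp : ω ^ p = 1) :
    ∃ Su : (Matrix (Fin 2) (Fin 2) ℂ)ˣ, Su ^ p = 1 ∧
      ∀ Y : ℕ, 1 ≤ Y → ((Su : Matrix (Fin 2) (Fin 2) ℂ) * Dm ω) ^ Y ≠ 1 := by
  have hω1' : ω - 1 ≠ 0 := sub_ne_zero.mpr hω1
  obtain ⟨a, ha⟩ : ∃ a : ℂ, a = (2 - ω⁻¹) / (ω - 1) := ⟨_, rfl⟩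
  have haω : a * (ω - 1) = 2 - ω⁻¹ := by rw [ha]; field_simp
  set S : Matrix (Fin 2) (Fin 2) ℂ := !![a, 1; a*(1+ω⁻¹-a) - ω⁻¹, 1+ω⁻¹-a] with hS
  have hS2 : S * S = (1 + ω⁻¹) • S - ω⁻¹ • 1 := cayley_S ω a
  set W : Matrix (Fin 2) (Fin 2) ℂ := ω • ((1 + ω⁻¹) • (1 : Matrix (Fin 2) (Fin 2) ℂ) - S)
    with hW
  have hSW : S * W = 1 := by
    rw [hW, mul_smul_comm, mul_sub, mul_smul_comm, mul_one, hS2]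
    rw [sub_sub_cancel, smul_smul, mul_inv_cancel₀ hω0, one_smul]
  have hWS : W * S = 1 := by
    rw [hW, smul_mul_assoc, sub_mul, smul_mul_assoc, one_mul, hS2]
    rw [sub_sub_cancel, smul_smul, mul_inv_cancel₀ hω0, one_smul]
  refine ⟨⟨S, W, hSW, hWS⟩, ?_, ?_⟩
  · -- S ^ p = 1
    apply Units.ext
    rw [Units.val_pow_eq_pow_val, Units.val_one]
    show S ^ p = 1
    have hinv1 : ω⁻¹ ≠ 1 := fun h => hω1 (by rw [← inv_inv ω, h, inv_one])
    have hd1 : (X - C (1:ℂ)) ∣ X ^ p - 1 := dvd_iff_isRoot.mpr (by simp [IsRoot])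
    have hd2 : (X - C ω⁻¹) ∣ X ^ p - 1 :=
      dvd_iff_isRoot.mpr (by simp [IsRoot, inv_pow, hωp])
    have hsub : (1:ℂ) - ω⁻¹ ≠ 0 := sub_ne_zero.mpr (Ne.symm hinv1)
    have hcp : IsCoprime (X - C (1:ℂ)) (X - C ω⁻¹) := by
      refine ⟨-C ((1 - ω⁻¹)⁻¹), C ((1 - ω⁻¹)⁻¹), ?_⟩
      have h1 : -C ((1 - ω⁻¹)⁻¹) * (X - C (1:ℂ)) + C ((1 - ω⁻¹)⁻¹) * (X - C ω⁻¹)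
          = C ((1 - ω⁻¹)⁻¹) * (C 1 - C ω⁻¹) := by ring
      rw [h1, ← C_sub, ← C_mul, inv_mul_cancel₀ hsub, C_1]
    obtain ⟨q, hq⟩ := hcp.mul_dvd hd1 hd2
    have h2 := congrArg (aeval S) hq
    simp only [map_sub, _root_.map_mul, map_pow, _root_.map_one, aeval_X, aeval_C] at h2
    have hz : (S - 1) * (S - algebraMap ℂ _ ω⁻¹) = 0 := by
      have he : (S - 1) * (S - algebraMap ℂ _ ω⁻¹) = S * S - ω⁻¹ • S - S + ω⁻¹ • 1 := by
        rw [Algebra.algebraMap_eq_smul_one]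
        rw [sub_mul, mul_sub, mul_sub, one_mul, mul_smul_comm, mul_one]
        abel_nf
        simp
      rw [he, hS2]; module
    rw [hz, zero_mul, sub_eq_zero] at h2
    exact h2
  · -- powers of S * Dm ω all have trace > 2
    intro Y hY hcontra
    have htra : a * ω + (1 + ω⁻¹ - a) = 3 := by
      have : a * ω - a = 2 - ω⁻¹ := by linear_combination haω
      linear_combination this
    obtain ⟨N, hN⟩ : ∃ N, N = S * Dm ω := ⟨_, rfl⟩
    rw [← hN] at hcontra
    have hNval : N = !![a * ω, 1; (a*(1+ω⁻¹-a) - ω⁻¹) * ω, 1+ω⁻¹-a] := by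
      rw [hN, hS, Dm, Matrix.mul_fin_two]
      norm_num
    have hN2 : N * N = (3:ℂ) • N - 1 := by
      rw [hNval]
      exact cayley_N ω a ω⁻¹ (mul_inv_cancel₀ hω0) htra
    have htr : ∀ nn : ℕ, (N ^ nn).trace = (bseq nn : ℂ) := by
      intro nn
      induction nn using Nat.twoStepInduction with
      | zero => norm_num [bseq, Matrix.trace_one]
      | one =>
        rw [pow_one, hNval]
        rw [Matrix.trace_fin_two_of, htra]
        norm_num [bseq]
      | more k ih1 ih2 =>
        have e : N ^ (k+2) = (3:ℂ) • N ^ (k+1) - N ^ k := by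
          rw [pow_succ, pow_succ, mul_assoc, hN2, mul_sub, mul_smul_comm, mul_one, ← pow_succ]
        rw [e, Matrix.trace_sub, Matrix.trace_smul, ih1, ih2]
        have eb : bseq (k+2) = 3 * bseq (k+1) - bseq k := by simp [bseq]
        rw [eb]; push_cast; rw [smul_eq_mul]
    have h2 := htr Y
    rw [hcontra, Matrix.trace_one] at h2
    have hb2 : bseq Y = 2 := by
      have : ((bseq Y : ℝ) : ℂ) = ((2:ℝ) : ℂ) := by rw [← h2]; norm_num
      exact_mod_cast this
    have hge := (bseq_ge Y).1
    rw [hb2] at hge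
    have h0 : (Y : ℝ) ≤ 0 := by linarith
    have h1 : (1 : ℝ) ≤ (Y : ℝ) := by exact_mod_cast hY
    linarith

end NoConjAux

/-- in the free group on `b = of 0`, `λ = of 1`, let `p > 1`, `r ≠ 0`
with `gcd (p, r) = 1`. Consider the cyclically reduced word
`v = λ^{p x₁} (b λ^r)^{y₁} ⋯ λ^{p x_l} (b λ^r)^{y_l}` with all `xᵢ` nonzero of the
same sign and all `yᵢ` positive. If some `y_j ≥ 2`, then `v` is not conjugate to
any word of the form `λ^{p n₁} b^{m₁} ⋯ λ^{p n_k} b^{m_k}` with all `nᵢ` and all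
`mᵢ` nonzero. -/
theorem no_conjugate_if_double_y (p r : ℤ) (hp : 1 < p) (hr : r ≠ 0)
    (hcop : Int.gcd p r = 1) (l : ℕ) (x : Fin l → ℤ) (y : Fin l → ℕ)
    (hx : ∀ i j, 0 < x i * x j) (hy : ∀ i, 0 < y i) (hyy : ∃ j, 2 ≤ y j)
    (b lam : FreeGroup (Fin 2)) (hb : b = FreeGroup.of 0) (hlam : lam = FreeGroup.of 1)
    (v : FreeGroup (Fin 2))
    (hv : v = ((List.finRange l).map (fun i => lam ^ (p * x i) * (b * lam ^ r) ^ (y i))).prod) :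
    ∀ (k : ℕ) (n m : Fin k → ℤ), (∀ i, n i ≠ 0) → (∀ i, m i ≠ 0) →
      ¬ IsConj (((List.finRange k).map (fun i => lam ^ (p * n i) * b ^ (m i))).prod) v := by
  intro k n m hn hm hconj
  classical
  -- p as a natural number
  have hp0 : (0:ℤ) ≤ p := by linarith
  obtain ⟨pn, hpn⟩ : ∃ pn : ℕ, (pn : ℤ) = p := ⟨p.toNat, Int.toNat_of_nonneg hp0⟩
  have hpn1 : 1 < pn := by exact_mod_cast hpn ▸ hp
  have hpnC : (pn : ℂ) ≠ 0 := Nat.cast_ne_zero.mpr (by omega)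
  -- the root of unity
  obtain ⟨θ, hθ⟩ : ∃ θ : ℂ, θ = (2 * (Real.pi:ℂ) * Complex.I) / pn := ⟨_, rfl⟩
  obtain ⟨ζ, hζ⟩ : ∃ ζ : ℂ, ζ = Complex.exp θ := ⟨_, rfl⟩
  have hζ0 : ζ ≠ 0 := hζ ▸ Complex.exp_ne_zero θ
  obtain ⟨ζu, hζu⟩ : ∃ ζu : ℂˣ, (ζu : ℂ) = ζ := ⟨Units.mk0 ζ hζ0, rfl⟩
  have hζpn : ζ ^ pn = 1 := by
    rw [hζ, ← Complex.exp_nat_mul, hθ, mul_div_cancel₀ _ hpnC]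
    exact Complex.exp_two_pi_mul_I
  have hζup : ζu ^ pn = 1 :=
    Units.ext (by rw [Units.val_pow_eq_pow_val, hζu, hζpn, Units.val_one])
  obtain ⟨ωu, hωu⟩ : ∃ ωu : ℂˣ, ωu = ζu ^ r := ⟨_, rfl⟩
  obtain ⟨ω, hω⟩ : ∃ ω : ℂ, ω = (ωu : ℂ) := ⟨_, rfl⟩
  have hωζ : ω = ζ ^ r := by
    rw [hω, hωu, Units.val_zpow_eq_zpow_val, hζu]
  have hω0 : ω ≠ 0 := hω ▸ Units.ne_zero ωu
  have hωup : ωu ^ pn = 1 := by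
    have h1 : ωu ^ (pn:ℤ) = (ζu ^ pn) ^ r := by
      rw [hωu, ← zpow_natCast ζu pn, ← _root_.zpow_mul, ← _root_.zpow_mul, mul_comm]
    rw [zpow_natCast] at h1
    rw [h1, hζup, _root_.one_zpow]
  have hωp : ω ^ pn = 1 := by
    rw [hω, ← Units.val_pow_eq_pow_val, hωup, Units.val_one]
  have h2πI : (2 * (Real.pi:ℂ) * Complex.I) ≠ 0 := by
    simp [Real.pi_ne_zero, Complex.I_ne_zero, Complex.ofReal_ne_zero]
  have hω1 : ω ≠ 1 := by
    intro hωone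
    have h1 : Complex.exp ((r:ℂ) * θ) = 1 := by
      rw [Complex.exp_int_mul, ← hζ, ← hωζ]
      exact hωone
    rw [Complex.exp_eq_one_iff] at h1
    obtain ⟨t, ht⟩ := h1
    rw [hθ] at ht
    have hrtp : (r:ℂ) = (t:ℂ) * pn := by
      field_simp at ht
      apply mul_right_cancel₀ h2πI
      rw [ht]; ring
    have hrtpZ : r = t * pn := by exact_mod_cast hrtp
    have hdvd : p ∣ r := ⟨t, by rw [hrtpZ, hpn]; ring⟩
    have hdg : p ∣ (Int.gcd p r : ℤ) := Int.dvd_coe_gcd dvd_rfl hdvd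
    rw [hcop] at hdg
    have := Int.le_of_dvd one_pos hdg
    linarith
  -- the matrices
  obtain ⟨Su, hSp, hMkey⟩ := core pn ω hω0 hω1 hωp
  obtain ⟨Tu, hTu⟩ : ∃ Tu : (Matrix (Fin 2) (Fin 2) ℂ)ˣ, Tu = Du ζu := ⟨_, rfl⟩
  have hTur : Tu ^ r = Du ωu := by rw [hTu, hωu, MonoidHom.map_zpow]
  have hTp : Tu ^ pn = 1 := by rw [hTu, ← map_pow, hζup, _root_.map_one]
  obtain ⟨φ, hφ⟩ : ∃ φ : FreeGroup (Fin 2) →* (Matrix (Fin 2) (Fin 2) ℂ)ˣ,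
      φ = FreeGroup.lift (fun i : Fin 2 => if i = 0 then Su else Tu) := ⟨_, rfl⟩
  have hφb : φ b = Su := by rw [hb, hφ, FreeGroup.lift_apply_of]; simp
  have hφl : φ lam = Tu := by rw [hlam, hφ, FreeGroup.lift_apply_of]; norm_num
  have hTpz : ∀ z : ℤ, Tu ^ (p * z) = 1 := by
    intro z
    rw [← hpn, _root_.zpow_mul, zpow_natCast, hTp, _root_.one_zpow]
  -- image of v
  obtain ⟨Ynat, hYnat⟩ : ∃ Ynat : ℕ, Ynat = ((List.finRange l).map y).sum := ⟨_, rfl⟩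
  have hφv : φ v = (Su * Tu ^ r) ^ Ynat := by
    rw [hv, map_list_prod, List.map_map]
    have he : (⇑φ ∘ fun i => lam ^ (p * x i) * (b * lam ^ r) ^ y i)
        = fun i => (Su * Tu ^ r) ^ y i := by
      funext i
      simp only [Function.comp_apply, _root_.map_mul, map_zpow, map_pow, hφb, hφl]
      rw [hTpz (x i), one_mul]
    rw [he, list_prod_pow, ← hYnat]
  -- image of the target word
  obtain ⟨Mz, hMzd⟩ : ∃ Mz : ℤ, Mz = ((List.finRange k).map m).sum := ⟨_, rfl⟩
  have hφt : φ (((List.finRange k).map (fun i => lam ^ (p * n i) * b ^ (m i))).prod)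
      = Su ^ Mz := by
    rw [map_list_prod, List.map_map]
    have he : (⇑φ ∘ fun i => lam ^ (p * n i) * b ^ m i) = fun i => Su ^ m i := by
      funext i
      simp only [Function.comp_apply, _root_.map_mul, map_zpow, hφb, hφl]
      rw [hTpz (n i), one_mul]
    rw [he, list_prod_zpow, ← hMzd]
  -- abelianization: b-exponent sums agree
  obtain ⟨ψb, hψbd⟩ : ∃ ψb : FreeGroup (Fin 2) →* Multiplicative ℤ,
      ψb = FreeGroup.lift (fun i : Fin 2 =>
        if i = 0 then Multiplicative.ofAdd (1:ℤ) else 1) := ⟨_, rfl⟩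
  have hψbb : ψb b = Multiplicative.ofAdd (1:ℤ) := by
    rw [hb, hψbd, FreeGroup.lift_apply_of]; simp
  have hψbl : ψb lam = 1 := by
    rw [hlam, hψbd, FreeGroup.lift_apply_of]; norm_num
  have hψbv : ψb v = Multiplicative.ofAdd ((Ynat : ℤ)) := by
    rw [hv, map_list_prod, List.map_map]
    have he : (⇑ψb ∘ fun i => lam ^ (p * x i) * (b * lam ^ r) ^ y i)
        = fun i => (Multiplicative.ofAdd (1:ℤ)) ^ y i := by
      funext i
      simp only [Function.comp_apply, _root_.map_mul, map_zpow, map_pow, hψbb, hψbl]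
      simp
    rw [he, list_prod_pow, ofAdd_one_pow, hYnat]
  have hψbt : ψb (((List.finRange k).map (fun i => lam ^ (p * n i) * b ^ (m i))).prod)
      = Multiplicative.ofAdd Mz := by
    rw [map_list_prod, List.map_map]
    have he : (⇑ψb ∘ fun i => lam ^ (p * n i) * b ^ m i)
        = fun i => (Multiplicative.ofAdd (1:ℤ)) ^ m i := by
      funext i
      simp only [Function.comp_apply, _root_.map_mul, map_zpow, hψbb, hψbl]
      simp
    rw [he, list_prod_zpow, ofAdd_one_zpow, hMzd]
  have hMY : Mz = (Ynat : ℤ) := by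
    have h1 := (MonoidHom.map_isConj ψb hconj)
    rw [hψbt, hψbv, isConj_iff_eq] at h1
    exact_mod_cast congrArg Multiplicative.toAdd h1
  -- abelianization: λ-exponent sums agree, giving p ∣ Ynat
  obtain ⟨ψl, hψld⟩ : ∃ ψl : FreeGroup (Fin 2) →* Multiplicative ℤ,
      ψl = FreeGroup.lift (fun i : Fin 2 =>
        if i = 0 then 1 else Multiplicative.ofAdd (1:ℤ)) := ⟨_, rfl⟩
  have hψlb : ψl b = 1 := by
    rw [hb, hψld, FreeGroup.lift_apply_of]; simp
  have hψll : ψl lam = Multiplicative.ofAdd (1:ℤ) := by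
    rw [hlam, hψld, FreeGroup.lift_apply_of]; norm_num
  have hψlv : ψl v = Multiplicative.ofAdd
      (((List.finRange l).map (fun i => p * x i + (y i : ℤ) * r)).sum) := by
    rw [hv, map_list_prod, List.map_map]
    have he : (⇑ψl ∘ fun i => lam ^ (p * x i) * (b * lam ^ r) ^ y i)
        = fun i => Multiplicative.ofAdd (p * x i + (y i : ℤ) * r) := by
      funext i
      simp only [Function.comp_apply, _root_.map_mul, map_zpow, map_pow, hψlb, hψll]
      rw [one_mul, ofAdd_one_zpow (p * x i), ofAdd_one_zpow r]
      rw [← ofAdd_nsmul, ← ofAdd_add, nsmul_eq_mul]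
    rw [he, list_prod_ofAdd]
  have hψlt : ψl (((List.finRange k).map (fun i => lam ^ (p * n i) * b ^ (m i))).prod)
      = Multiplicative.ofAdd (((List.finRange k).map (fun i => p * n i)).sum) := by
    rw [map_list_prod, List.map_map]
    have he : (⇑ψl ∘ fun i => lam ^ (p * n i) * b ^ m i)
        = fun i => Multiplicative.ofAdd (p * n i) := by
      funext i
      simp only [Function.comp_apply, _root_.map_mul, map_zpow, hψlb, hψll]
      rw [ofAdd_one_zpow (p * n i), _root_.one_zpow, mul_one]
    rw [he, list_prod_ofAdd]
  have hsum : ((List.finRange k).map (fun i => p * n i)).sum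
      = ((List.finRange l).map (fun i => p * x i + (y i : ℤ) * r)).sum := by
    have h1 := (MonoidHom.map_isConj ψl hconj)
    rw [hψlt, hψlv, isConj_iff_eq] at h1
    exact_mod_cast congrArg Multiplicative.toAdd h1
  have hpds : (p:ℤ) ∣ (Ynat:ℤ) := by
    have hL : ((List.finRange k).map (fun i => p * n i)).sum
        = p * ((List.finRange k).map n).sum := List.sum_map_mul_left _ _ _
    have hR : ((List.finRange l).map (fun i => p * x i + (y i : ℤ) * r)).sum
        = p * ((List.finRange l).map x).sum + (Ynat : ℤ) * r := by
      rw [list_sum_split]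
      congr 1
      · exact List.sum_map_mul_left _ _ _
      · rw [show ((List.finRange l).map fun i => (y i : ℤ) * r)
            = ((List.finRange l).map fun i => ((fun j => ((y j : ℤ))) i * r)) from rfl]
        rw [List.sum_map_mul_right, list_sum_cast, hYnat]
    have hcpz : IsCoprime (p:ℤ) r := Int.isCoprime_iff_gcd_eq_one.mpr hcop
    apply hcpz.dvd_of_dvd_mul_right
    refine ⟨((List.finRange k).map n).sum - ((List.finRange l).map x).sum, ?_⟩
    rw [hL, hR] at hsum
    linarith
  have hpnY : pn ∣ Ynat := by
    rw [← hpn] at hpds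
    exact_mod_cast hpds
  obtain ⟨t2, ht2⟩ := hpnY
  -- image of the target is trivial
  have hSuM : Su ^ Mz = 1 := by
    rw [hMY, zpow_natCast, ht2, pow_mul, hSp, one_pow]
  -- conclude
  have hφc := MonoidHom.map_isConj φ hconj
  rw [hφt, hφv, hSuM] at hφc
  have hone := isConj_one_right.mp hφc
  have hmat := congrArg Units.val hone
  rw [Units.val_pow_eq_pow_val, Units.val_mul, Units.val_one] at hmat
  have hTrval : ((Tu ^ r : (Matrix (Fin 2) (Fin 2) ℂ)ˣ) : Matrix (Fin 2) (Fin 2) ℂ)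
      = Dm ω := by rw [hTur, Du_val, hω]
  rw [hTrval] at hmat
  obtain ⟨j, hj⟩ := hyy
  have hjm : y j ∈ (List.finRange l).map y :=
    List.mem_map_of_mem (List.mem_finRange j)
  have hY1 : 1 ≤ Ynat := by
    have := List.le_sum_of_mem hjm
    omega
  exact hMkey Ynat hY1 hmat
end
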